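/- For a convex symmetric set K ⊆ ℝ^n and t > 0, the combinatorial dimension v(K, t) equals the maximal cardinality of a subset I ⊆ {1,...,n} such that the coordinate projection P_I K contains the cube [-t/2, t/2]^I. -/

import Mathlib

/-- The coordinate projection of `K ⊆ ℝ^n` onto the coordinates in `I`. -/
def projSet {n : ℕ} (K : Set (Fin n → ℝ)) (I : Finset (Fin n)) :
    Set ({i // i ∈ I} → ℝ) :=
  {z | ∃ x ∈ K, ∀ i : {i // i ∈ I}, x i.1 = z i}

/-- `I` is `t`-shattered by `K ⊆ ℝ^n`. -/
def TShattered {n : ℕ} (K : Set (Fin n → ℝ)) (I : Finset (Fin n)) (t : ℝ) : Prop :=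
  ∃ h : Fin n → ℝ, ∀ S ⊆ I, ∃ x ∈ K,
    (∀ i ∈ S, h i + t ≤ x i) ∧ (∀ i ∈ I \ S, x i ≤ h i)

/-- Key convexity lemma: if a convex set contains, for every `S ⊆ I`, a point
which is `≥ t/2` on `S` and `≤ -t/2` on `I \ S`, then every point of the cube
`[-t/2, t/2]^I` is realized on `I` by some point of the set. -/
lemma cube_lemma {n : ℕ} (t : ℝ) (ht : 0 < t) (I : Finset (Fin n)) :
    ∀ K : Set (Fin n → ℝ), Convex ℝ K →
    (∀ S ⊆ I, ∃ x ∈ K, (∀ i ∈ S, t / 2 ≤ x i) ∧ (∀ i ∈ I \ S, x i ≤ -(t / 2))) →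
    ∀ c : Fin n → ℝ, (∀ i ∈ I, |c i| ≤ t / 2) → ∃ x ∈ K, ∀ i ∈ I, x i = c i := by
  induction I using Finset.induction_on with
  | empty =>
    intro K hK hS c hc
    obtain ⟨x, hx, -⟩ := hS ∅ (by simp)
    exact ⟨x, hx, by simp⟩
  | @insert j I' hj ih =>
    intro K hK hS c hc
    set K' : Set (Fin n → ℝ) := K ∩ {x | x j = c j} with hK'def
    have hK'conv : Convex ℝ K' := by
      apply hK.inter
      intro x hx y hy a b ha hb hab
      simp only [Set.mem_setOf_eq, Pi.add_apply, Pi.smul_apply, smul_eq_mul] at hx hy ⊢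
      rw [hx, hy]
      linear_combination (c j) * hab
    have hcj : |c j| ≤ t / 2 := hc j (Finset.mem_insert_self j I')
    have hS' : ∀ S ⊆ I', ∃ x ∈ K',
        (∀ i ∈ S, t / 2 ≤ x i) ∧ (∀ i ∈ I' \ S, x i ≤ -(t / 2)) := by
      intro S hSI
      obtain ⟨xp, hxpK, hxp1, hxp2⟩ := hS (insert j S)
        (Finset.insert_subset_insert j hSI)
      obtain ⟨xm, hxmK, hxm1, hxm2⟩ := hS S
        (hSI.trans (Finset.subset_insert j I'))
      have hjS : j ∉ S := fun h => hj (hSI h)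
      have ha : t / 2 ≤ xp j := hxp1 j (Finset.mem_insert_self j S)
      have hb : xm j ≤ -(t / 2) := hxm2 j (by
        simp [Finset.mem_sdiff, hjS])
      have hab : xm j < xp j := by linarith
      set θ : ℝ := (c j - xm j) / (xp j - xm j) with hθdef
      have hden : 0 < xp j - xm j := by linarith
      have hθ0 : 0 ≤ θ := div_nonneg (by cases abs_le.mp hcj; linarith) (le_of_lt hden)
      have hθ1 : θ ≤ 1 := by
        rw [div_le_one hden]
        cases abs_le.mp hcj; linarith
      refine ⟨θ • xp + (1 - θ) • xm, ⟨hK hxpK hxmK hθ0 (by linarith) (by ring), ?_⟩, ?_, ?_⟩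
      · show θ * xp j + (1 - θ) * xm j = c j
        field_simp [hθdef]
        have hθm : θ * (xp j - xm j) = c j - xm j := by
          rw [hθdef]; exact div_mul_cancel₀ _ (ne_of_gt hden)
        linear_combination hθm
      · intro i hi
        have h1 : t / 2 ≤ xp i := hxp1 i (Finset.mem_insert_of_mem hi)
        have h2 : t / 2 ≤ xm i := hxm1 i hi
        show t / 2 ≤ θ * xp i + (1 - θ) * xm i
        nlinarith
      · intro i hi
        rw [Finset.mem_sdiff] at hi
        have hij : i ≠ j := fun h => hj (h ▸ hi.1)
        have h1 : xp i ≤ -(t / 2) := hxp2 i (by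
          simp [Finset.mem_sdiff, Finset.mem_insert, hi.1, hi.2, hij])
        have h2 : xm i ≤ -(t / 2) := hxm2 i (by
          simp [Finset.mem_sdiff, Finset.mem_insert, hi.1, hi.2, hij])
        show θ * xp i + (1 - θ) * xm i ≤ -(t / 2)
        nlinarith
    obtain ⟨x, ⟨hxK, hxj⟩, hx⟩ := ih K' hK'conv hS' c
      (fun i hi => hc i (Finset.mem_insert_of_mem hi))
    refine ⟨x, hxK, ?_⟩
    intro i hi
    rcases Finset.mem_insert.mp hi with h | h
    · exact h ▸ hxj
    · exact hx i h

/-- For a convex symmetric `K ⊆ ℝ^n` and `t > 0`, the combinatorial dimension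
`v(K,t)` (the largest cardinality of a `t`-shattered set) coincides with the
largest cardinality of a coordinate set `I` for which `P_I K` contains the
cube `[-t/2, t/2]^I`: for every `d`, there is a `t`-shattered set of size at
least `d` iff there is a set `I` of size at least `d` with
`[-t/2,t/2]^I ⊆ P_I K`. -/
theorem comb_dim_eq_cube_in_projection (n : ℕ) (K : Set (Fin n → ℝ))
    (hconv : Convex ℝ K) (hsym : K = -K) (t : ℝ) (ht : 0 < t) (d : ℕ) :
    (∃ I : Finset (Fin n), d ≤ I.card ∧ TShattered K I t) ↔
    (∃ I : Finset (Fin n), d ≤ I.card ∧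
      ∀ c : {i // i ∈ I} → ℝ, (∀ i, |c i| ≤ t / 2) → c ∈ projSet K I) := by
  constructor
  · rintro ⟨I, hId, h, hh⟩
    refine ⟨I, hId, ?_⟩
    -- derive the symmetric hypothesis of cube_lemma
    have hS : ∀ S ⊆ I, ∃ x ∈ K,
        (∀ i ∈ S, t / 2 ≤ x i) ∧ (∀ i ∈ I \ S, x i ≤ -(t / 2)) := by
      intro S hSI
      obtain ⟨x₁, hx₁K, hx₁1, hx₁2⟩ := hh S hSI
      obtain ⟨x₂, hx₂K, hx₂1, hx₂2⟩ := hh (I \ S) (Finset.sdiff_subset)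
      have hx₂K' : -x₂ ∈ K := by
        rw [hsym]
        simpa only [Set.mem_neg, neg_neg] using hx₂K
      refine ⟨(1/2 : ℝ) • x₁ + (1/2 : ℝ) • (-x₂),
        hconv hx₁K hx₂K' (by norm_num) (by norm_num) (by norm_num), ?_, ?_⟩
      · intro i hi
        have h1 : h i + t ≤ x₁ i := hx₁1 i hi
        have h2 : x₂ i ≤ h i := hx₂2 i (by
          simp [Finset.mem_sdiff, hi, hSI hi])
        show t / 2 ≤ (1/2 : ℝ) * x₁ i + (1/2 : ℝ) * (-x₂ i)
        linarith
      · intro i hi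
        rw [Finset.mem_sdiff] at hi
        have h1 : x₁ i ≤ h i := hx₁2 i (by simp [Finset.mem_sdiff, hi.1, hi.2])
        have h2 : h i + t ≤ x₂ i := hx₂1 i (by simp [Finset.mem_sdiff, hi.1, hi.2])
        show (1/2 : ℝ) * x₁ i + (1/2 : ℝ) * (-x₂ i) ≤ -(t / 2)
        linarith
    intro c hc
    classical
    set cext : Fin n → ℝ := fun i => if hi : i ∈ I then c ⟨i, hi⟩ else 0 with hcext
    have hcb : ∀ i ∈ I, |cext i| ≤ t / 2 := by
      intro i hi
      simp only [hcext, dif_pos hi]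
      exact hc ⟨i, hi⟩
    obtain ⟨x, hxK, hx⟩ := cube_lemma t ht I K hconv hS cext hcb
    refine ⟨x, hxK, ?_⟩
    intro i
    have := hx i.1 i.2
    simpa [hcext, dif_pos i.2] using this
  · rintro ⟨I, hId, hcube⟩
    refine ⟨I, hId, fun _ => -(t / 2), ?_⟩
    intro S hSI
    classical
    set c : {i // i ∈ I} → ℝ := fun i => if i.1 ∈ S then t / 2 else -(t / 2) with hcdef
    have hcb : ∀ i, |c i| ≤ t / 2 := by
      intro i
      have h2 : (0:ℝ) ≤ t / 2 := by linarith
      simp only [hcdef]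
      split
      · rw [abs_of_nonneg h2]
      · rw [abs_neg, abs_of_nonneg h2]
    obtain ⟨x, hxK, hx⟩ := hcube c hcb
    refine ⟨x, hxK, ?_, ?_⟩
    · intro i hi
      have := hx ⟨i, hSI hi⟩
      simp only [hcdef, if_pos hi] at this
      linarith [this.ge]
    · intro i hi
      rw [Finset.mem_sdiff] at hi
      have := hx ⟨i, hi.1⟩
      simp only [hcdef, if_neg hi.2] at this
      linarith [this.le]
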